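/- Let X = [0,1]^d, let Y ⊂ ℝ^d be compact and convex, and let μ be a Borel probability measure on X. Then (Π(μ), 𝒲) is a geodesic space: for all π⁰, π¹ ∈ Π(μ) there exists a curve [0,1] ∋ s ↦ π(s) ∈ Π(μ) with π(0) = π⁰, π(1) = π¹ and 𝒲(π(s), π(s')) = |s−s'| · 𝒲(π⁰, π¹) for all s, s' ∈ [0,1]. -/

import Mathlib

open MeasureTheory Set Filter
open scoped ENNReal Classical

noncomputable section

abbrev E (d : ℕ) : Type := EuclideanSpace ℝ (Fin d)

/-- Optimal-transport cost with cost function `c`. -/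
noncomputable def OTC {A B : Type*} [MeasurableSpace A] [MeasurableSpace B]
    (c : A → B → ℝ≥0∞) (α : Measure A) (β : Measure B) : ℝ≥0∞ :=
  ⨅ (γ : Measure (A × B)) (_ : γ.map Prod.fst = α) (_ : γ.map Prod.snd = β),
    ∫⁻ p, c p.1 p.2 ∂γ

/-- Wasserstein-1 distance. -/
noncomputable def W1 {S : Type*} [MeasurableSpace S] [PseudoEMetricSpace S]
    (α β : Measure S) : ℝ≥0∞ :=
  OTC edist α β

/-- Disintegration (conditional kernel) of a measure on a product space. -/
noncomputable def disint {α Ω : Type*} [MeasurableSpace α] [MeasurableSpace Ω]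
    [StandardBorelSpace Ω] [Nonempty Ω] (π : Measure (α × Ω)) (x : α) : Measure Ω :=
  if h : IsFiniteMeasure π then
    haveI := h
    Measure.condKernel π x
  else 0

/-- The vertical transport metric `𝒲(π, π') = ∫ W_Y(π_x, π'_x) dμ(x)`. -/
noncomputable def VW {α Ω : Type*} [MeasurableSpace α] [MeasurableSpace Ω] [PseudoEMetricSpace Ω]
    [StandardBorelSpace Ω] [Nonempty Ω]
    (μ : Measure α) (π π' : Measure (α × Ω)) : ℝ≥0∞ :=
  ∫⁻ x, W1 (disint π x) (disint π' x) ∂μ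

/-- Euclidean distance on `ℝ^d × ℝ^d = ℝ^{2d}`. -/
noncomputable def edistE2 {d₁ d₂ : ℕ} (p q : E d₁ × E d₂) : ℝ≥0∞ :=
  ENNReal.ofReal (Real.sqrt (dist p.1 q.1 ^ 2 + dist p.2 q.2 ^ 2))

/-- The cube `X = [0,1]^d`. -/
def Xcube (d : ℕ) : Set (E d) := {x | ∀ i, x i ∈ Icc (0:ℝ) 1}

section W1Lemmas

open ProbabilityTheory

variable {d : ℕ}

lemma W1_le (α β : Measure (E d)) (γ : Measure (E d × E d))
    (hf : γ.map Prod.fst = α) (hs : γ.map Prod.snd = β) :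
    W1 α β ≤ ∫⁻ p, edist p.1 p.2 ∂γ :=
  le_trans (iInf_le _ γ) (le_trans (iInf_le _ hf) (iInf_le _ hs))

lemma exists_coupling_lt {α β : Measure (E d)} {t : ℝ≥0∞} (h : W1 α β < t) :
    ∃ γ : Measure (E d × E d), γ.map Prod.fst = α ∧ γ.map Prod.snd = β ∧
      (∫⁻ p, edist p.1 p.2 ∂γ) < t := by
  simp only [W1, OTC, iInf_lt_iff] at h
  obtain ⟨γ, h1, h2, h3⟩ := h
  exact ⟨γ, h1, h2, h3⟩

lemma W1_self (ξ : Measure (E d)) : W1 ξ ξ = 0 := by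
  have hD : Measurable (fun u : E d => (u, u)) := measurable_id.prodMk measurable_id
  refine le_antisymm ?_ zero_le
  have h := W1_le ξ ξ (ξ.map (fun u => (u, u))) ?_ ?_
  · refine h.trans_eq ?_
    rw [lintegral_map measurable_edist hD]
    simp
  · rw [Measure.map_map measurable_fst hD]
    simp [Function.comp_def]
  · rw [Measure.map_map measurable_snd hD]
    simp [Function.comp_def]

lemma W1_symm (α β : Measure (E d)) : W1 α β = W1 β α := by
  suffices H : ∀ α β : Measure (E d), W1 β α ≤ W1 α β from le_antisymm (H β α) (H α β)
  intro α β
  refine le_iInf fun γ => le_iInf fun hf => le_iInf fun hs => ?_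
  have h := W1_le β α (γ.map Prod.swap) ?_ ?_
  · refine h.trans_eq ?_
    rw [lintegral_map measurable_edist measurable_swap]
    exact lintegral_congr fun p => edist_comm _ _
  · rw [Measure.map_map measurable_fst measurable_swap]
    exact hs
  · rw [Measure.map_map measurable_snd measurable_swap]
    exact hf

lemma isProbabilityMeasure_of_map_fst {γ : Measure (E d × E d)} {α : Measure (E d)}
    [IsProbabilityMeasure α] (h : γ.map Prod.fst = α) : IsProbabilityMeasure γ := by
  constructor
  have := congrArg (fun m : Measure (E d) => m Set.univ) h
  simpa [Measure.map_apply measurable_fst MeasurableSet.univ] using this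

lemma W1_triangle (α β ν : Measure (E d)) [IsProbabilityMeasure α] [IsProbabilityMeasure β]
    [IsProbabilityMeasure ν] : W1 α ν ≤ W1 α β + W1 β ν := by
  have key : ∀ γ1 γ2 : Measure (E d × E d), γ1.map Prod.fst = α → γ1.map Prod.snd = β →
      γ2.map Prod.fst = β → γ2.map Prod.snd = ν →
      W1 α ν ≤ (∫⁻ p, edist p.1 p.2 ∂γ1) + ∫⁻ p, edist p.1 p.2 ∂γ2 := by
    intro γ1 γ2 h1f h1s h2f h2s
    haveI : IsProbabilityMeasure γ1 := isProbabilityMeasure_of_map_fst h1f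
    haveI : IsProbabilityMeasure γ2 := isProbabilityMeasure_of_map_fst h2f
    set σ : Measure (E d × E d) := γ1.map Prod.swap with hσdef
    haveI : IsProbabilityMeasure σ := by
      constructor
      rw [Measure.map_apply measurable_swap MeasurableSet.univ]
      simp
    have hσf : σ.fst = β := by
      rw [hσdef, Measure.fst_map_swap]
      exact h1s
    have hγ2f : γ2.fst = β := h2f
    set η1 := σ.condKernel with hη1
    set η2 := γ2.condKernel with hη2
    have hd1 : β ⊗ₘ η1 = σ := by
      rw [← hσf]; exact σ.disintegrate σ.condKernel
    have hd2 : β ⊗ₘ η2 = γ2 := by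
      rw [← hγ2f]; exact γ2.disintegrate γ2.condKernel
    set K : Kernel (E d) (E d × E d) := η1 ×ₖ η2 with hK
    set m3 : Measure (E d × (E d × E d)) := β ⊗ₘ K with hm3
    set γ : Measure (E d × E d) := m3.map Prod.snd with hγ
    have hslice1 : ∀ (t : Set (E d)), MeasurableSet t →
        ∀ b, K b (Prod.mk b ⁻¹' (Prod.snd ⁻¹' (Prod.fst ⁻¹' t))) = η1 b t := by
      intro t ht b
      have he : (Prod.mk b ⁻¹' (Prod.snd ⁻¹' (Prod.fst ⁻¹' t)) : Set (E d × E d))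
          = t ×ˢ Set.univ := by ext q; simp
      rw [he, hK, Kernel.prod_apply, Measure.prod_prod, measure_univ, mul_one]
    have hmapfst : γ.map Prod.fst = α := by
      ext t ht
      rw [Measure.map_apply measurable_fst ht, hγ,
        Measure.map_apply measurable_snd (measurable_fst ht), hm3,
        Measure.compProd_apply ((measurable_fst ht).preimage measurable_snd)]
      simp_rw [hslice1 t ht]
      have hσt : σ (Set.univ ×ˢ t) = ∫⁻ b, η1 b t ∂β := by
        rw [← hd1, Measure.compProd_apply (MeasurableSet.univ.prod ht)]
        refine lintegral_congr fun b => ?_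
        congr 1
        ext u; simp
      have hσt2 : σ (Set.univ ×ˢ t) = α t := by
        rw [hσdef, Measure.map_apply measurable_swap (MeasurableSet.univ.prod ht)]
        have he2 : (Prod.swap ⁻¹' (Set.univ ×ˢ t) : Set (E d × E d)) = Prod.fst ⁻¹' t := by
          ext p; simp
        rw [he2, ← Measure.map_apply measurable_fst ht, h1f]
      rw [← hσt, hσt2]
    have hslice2 : ∀ (t : Set (E d)), MeasurableSet t →
        ∀ b, K b (Prod.mk b ⁻¹' (Prod.snd ⁻¹' (Prod.snd ⁻¹' t))) = η2 b t := by
      intro t ht b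
      have he : (Prod.mk b ⁻¹' (Prod.snd ⁻¹' (Prod.snd ⁻¹' t)) : Set (E d × E d))
          = Set.univ ×ˢ t := by ext q; simp
      rw [he, hK, Kernel.prod_apply, Measure.prod_prod, measure_univ, one_mul]
    have hmapsnd : γ.map Prod.snd = ν := by
      ext t ht
      rw [Measure.map_apply measurable_snd ht, hγ,
        Measure.map_apply measurable_snd (measurable_snd ht), hm3,
        Measure.compProd_apply ((measurable_snd ht).preimage measurable_snd)]
      simp_rw [hslice2 t ht]
      have hγ2t : γ2 (Set.univ ×ˢ t) = ∫⁻ b, η2 b t ∂β := by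
        rw [← hd2, Measure.compProd_apply (MeasurableSet.univ.prod ht)]
        refine lintegral_congr fun b => ?_
        congr 1
        ext u; simp
      have hγ2t2 : γ2 (Set.univ ×ˢ t) = ν t := by
        have he2 : (Set.univ ×ˢ t : Set (E d × E d)) = Prod.snd ⁻¹' t := by ext p; simp
        rw [he2, ← Measure.map_apply measurable_snd ht, h2s]
      rw [← hγ2t, hγ2t2]
    refine (W1_le α ν γ hmapfst hmapsnd).trans ?_
    have hm1 : Measurable fun p : E d × (E d × E d) => edist p.2.1 p.1 :=
      measurable_snd.fst.edist measurable_fst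
    have hm2 : Measurable fun p : E d × (E d × E d) => edist p.1 p.2.2 :=
      measurable_fst.edist measurable_snd.snd
    have hcostγ : (∫⁻ p, edist p.1 p.2 ∂γ)
        ≤ (∫⁻ p, edist p.2.1 p.1 ∂m3) + ∫⁻ p, edist p.1 p.2.2 ∂m3 := by
      rw [hγ, lintegral_map measurable_edist measurable_snd]
      calc ∫⁻ p : E d × (E d × E d), edist p.2.1 p.2.2 ∂m3
          ≤ ∫⁻ p : E d × (E d × E d), edist p.2.1 p.1 + edist p.1 p.2.2 ∂m3 :=
            lintegral_mono fun p => edist_triangle _ _ _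
        _ = (∫⁻ p, edist p.2.1 p.1 ∂m3) + ∫⁻ p, edist p.1 p.2.2 ∂m3 :=
            lintegral_add_left hm1 _
    have hterm1 : (∫⁻ p, edist p.2.1 p.1 ∂m3) = ∫⁻ p, edist p.1 p.2 ∂γ1 := by
      rw [hm3, Measure.lintegral_compProd hm1]
      have hright : (∫⁻ p, edist p.1 p.2 ∂γ1) = ∫⁻ p, edist p.2 p.1 ∂σ := by
        rw [hσdef, lintegral_map (measurable_snd.edist measurable_fst) measurable_swap]
        rfl
      rw [hright, ← hd1, Measure.lintegral_compProd (measurable_snd.edist measurable_fst)]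
      refine lintegral_congr fun b => ?_
      rw [hK, Kernel.lintegral_prod _ _ _ (measurable_fst.edist measurable_const)]
      refine lintegral_congr fun u => ?_
      simp
    have hterm2 : (∫⁻ p, edist p.1 p.2.2 ∂m3) = ∫⁻ p, edist p.1 p.2 ∂γ2 := by
      rw [hm3, Measure.lintegral_compProd hm2]
      rw [← hd2, Measure.lintegral_compProd (measurable_fst.edist measurable_snd)]
      refine lintegral_congr fun b => ?_
      rw [hK, Kernel.lintegral_prod _ _ _ (measurable_const.edist measurable_snd)]
      have : ∀ u : E d, (∫⁻ v, edist b v ∂η2 b) = ∫⁻ v, edist b v ∂η2 b := fun _ => rfl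
      calc (∫⁻ u, ∫⁻ v, edist b v ∂η2 b ∂η1 b)
          = ∫⁻ _, ∫⁻ v, edist b v ∂η2 b ∂η1 b := rfl
        _ = ∫⁻ v, edist b v ∂η2 b := by
            rw [lintegral_const, measure_univ, mul_one]
    refine hcostγ.trans ?_
    rw [hterm1, hterm2]
  by_cases hb : W1 α β = ∞
  · rw [hb]; simp
  by_cases hn : W1 β ν = ∞
  · rw [hn]; simp
  refine ENNReal.le_of_forall_pos_le_add fun ε hε _ => ?_
  have hε2 : ((ε : ℝ≥0∞) / 2) ≠ 0 := by
    simp [ENNReal.div_eq_zero_iff, hε.ne']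
  obtain ⟨γ1, hf1, hs1, hc1⟩ := exists_coupling_lt (ENNReal.lt_add_right hb hε2)
  obtain ⟨γ2, hf2, hs2, hc2⟩ := exists_coupling_lt (ENNReal.lt_add_right hn hε2)
  calc W1 α ν ≤ _ + _ := key γ1 γ2 hf1 hs1 hf2 hs2
    _ ≤ (W1 α β + ε / 2) + (W1 β ν + ε / 2) := add_le_add hc1.le hc2.le
    _ = W1 α β + W1 β ν + ε := by rw [add_add_add_comm, ENNReal.add_halves]

/-- Linear interpolation between two measures. -/
noncomputable def itp (s : ℝ) (α β : Measure (E d)) : Measure (E d) :=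
  ENNReal.ofReal (1 - s) • α + ENNReal.ofReal s • β

lemma itp_zero (α β : Measure (E d)) : itp 0 α β = α := by
  simp [itp]

lemma itp_one (α β : Measure (E d)) : itp 1 α β = β := by
  simp [itp]

lemma itp_prob (α β : Measure (E d)) [IsProbabilityMeasure α] [IsProbabilityMeasure β]
    {s : ℝ} (h0 : 0 ≤ s) (h1 : s ≤ 1) : IsProbabilityMeasure (itp s α β) := by
  constructor
  simp only [itp, Measure.coe_add, Measure.coe_smul, Pi.add_apply, Pi.smul_apply,
    smul_eq_mul, measure_univ, mul_one]
  rw [← ENNReal.ofReal_add (by linarith) h0]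
  norm_num

lemma itp_upper (α β : Measure (E d)) [IsProbabilityMeasure α] [IsProbabilityMeasure β]
    (γ : Measure (E d × E d)) (hf : γ.map Prod.fst = α) (hs : γ.map Prod.snd = β)
    {s s' : ℝ} (h0 : 0 ≤ s) (hss' : s ≤ s') (h1 : s' ≤ 1) :
    W1 (itp s α β) (itp s' α β) ≤ ENNReal.ofReal (s' - s) * ∫⁻ p, edist p.1 p.2 ∂γ := by
  have hD : Measurable (fun u : E d => (u, u)) := measurable_id.prodMk measurable_id
  set γ' : Measure (E d × E d) :=
    ENNReal.ofReal (1 - s') • α.map (fun u => (u, u)) +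
      ENNReal.ofReal s • β.map (fun u => (u, u)) + ENNReal.ofReal (s' - s) • γ with hγ'
  have hαD : (α.map (fun u : E d => (u, u))).map Prod.fst = α := by
    rw [Measure.map_map measurable_fst hD]; simp [Function.comp_def]
  have hαD' : (α.map (fun u : E d => (u, u))).map Prod.snd = α := by
    rw [Measure.map_map measurable_snd hD]; simp [Function.comp_def]
  have hβD : (β.map (fun u : E d => (u, u))).map Prod.fst = β := by
    rw [Measure.map_map measurable_fst hD]; simp [Function.comp_def]
  have hβD' : (β.map (fun u : E d => (u, u))).map Prod.snd = β := by
    rw [Measure.map_map measurable_snd hD]; simp [Function.comp_def]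
  have hγ'f : γ'.map Prod.fst = itp s α β := by
    rw [hγ', Measure.map_add _ _ measurable_fst, Measure.map_add _ _ measurable_fst,
      Measure.map_smul, Measure.map_smul, Measure.map_smul, hαD, hβD, hf]
    rw [itp, add_right_comm, ← add_smul, ← ENNReal.ofReal_add (by linarith) (by linarith)]
    ring_nf
  have hγ's : γ'.map Prod.snd = itp s' α β := by
    rw [hγ', Measure.map_add _ _ measurable_snd, Measure.map_add _ _ measurable_snd,
      Measure.map_smul, Measure.map_smul, Measure.map_smul, hαD', hβD', hs]
    rw [itp, add_assoc, ← add_smul, ← ENNReal.ofReal_add h0 (by linarith)]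
    ring_nf
  refine (W1_le _ _ γ' hγ'f hγ's).trans_eq ?_
  rw [hγ', lintegral_add_measure, lintegral_add_measure, lintegral_smul_measure,
    lintegral_smul_measure, lintegral_smul_measure,
    lintegral_map measurable_edist hD, lintegral_map measurable_edist hD]
  simp

lemma itp_le (α β : Measure (E d)) [IsProbabilityMeasure α] [IsProbabilityMeasure β]
    {s s' : ℝ} (h0 : 0 ≤ s) (hss' : s ≤ s') (h1 : s' ≤ 1) :
    W1 (itp s α β) (itp s' α β) ≤ ENNReal.ofReal (s' - s) * W1 α β := by
  rcases eq_or_lt_of_le hss' with rfl | hlt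
  · rw [W1_self]; exact zero_le
  by_cases htop : W1 α β = ∞
  · rw [htop, ENNReal.mul_top (by simp [ENNReal.ofReal_eq_zero]; linarith)]
    exact le_top
  refine ENNReal.le_of_forall_pos_le_add fun ε hε _ => ?_
  have hlt' : W1 α β < W1 α β + ε := ENNReal.lt_add_right htop (by exact_mod_cast hε.ne')
  obtain ⟨γ, hf, hsn, hc⟩ := exists_coupling_lt hlt'
  calc W1 (itp s α β) (itp s' α β)
      ≤ ENNReal.ofReal (s' - s) * ∫⁻ p, edist p.1 p.2 ∂γ := itp_upper α β γ hf hsn h0 hss' h1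
    _ ≤ ENNReal.ofReal (s' - s) * (W1 α β + ε) := mul_le_mul' le_rfl hc.le
    _ = ENNReal.ofReal (s' - s) * W1 α β + ENNReal.ofReal (s' - s) * ε := mul_add _ _ _
    _ ≤ ENNReal.ofReal (s' - s) * W1 α β + ε := by
        refine add_le_add_right ?_ _
        calc ENNReal.ofReal (s' - s) * ε ≤ 1 * ε :=
              mul_le_mul_left (ENNReal.ofReal_le_one.mpr (by linarith)) _
          _ = ε := one_mul _

lemma itp_eq (α β : Measure (E d)) [IsProbabilityMeasure α] [IsProbabilityMeasure β]
    (htop : W1 α β ≠ ∞) {s s' : ℝ} (h0 : 0 ≤ s) (hss' : s ≤ s') (h1 : s' ≤ 1) :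
    W1 (itp s α β) (itp s' α β) = ENNReal.ofReal (s' - s) * W1 α β := by
  haveI hps : IsProbabilityMeasure (itp s α β) := itp_prob α β h0 (by linarith)
  haveI hps' : IsProbabilityMeasure (itp s' α β) := itp_prob α β (by linarith) h1
  refine le_antisymm (itp_le α β h0 hss' h1) ?_
  have e0 : W1 α (itp s α β) ≤ ENNReal.ofReal s * W1 α β := by
    have h := itp_le α β (le_refl (0:ℝ)) h0 (by linarith)
    rw [itp_zero] at h
    simpa using h
  have e1 : W1 (itp s' α β) β ≤ ENNReal.ofReal (1 - s') * W1 α β := by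
    have h := itp_le α β (by linarith : (0:ℝ) ≤ s') h1 (le_refl (1:ℝ))
    rw [itp_one] at h
    exact h
  have ch : W1 α β ≤ W1 (itp s α β) (itp s' α β) +
      (ENNReal.ofReal s * W1 α β + ENNReal.ofReal (1 - s') * W1 α β) := by
    calc W1 α β ≤ W1 α (itp s' α β) + W1 (itp s' α β) β := W1_triangle _ _ _
      _ ≤ (W1 α (itp s α β) + W1 (itp s α β) (itp s' α β)) + W1 (itp s' α β) β :=
          add_le_add_left (W1_triangle _ _ _) _
      _ ≤ (ENNReal.ofReal s * W1 α β + W1 (itp s α β) (itp s' α β)) +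
          ENNReal.ofReal (1 - s') * W1 α β := add_le_add (add_le_add_left e0 _) e1
      _ = W1 (itp s α β) (itp s' α β) +
          (ENNReal.ofReal s * W1 α β + ENNReal.ofReal (1 - s') * W1 α β) := by ring
  have hdecomp : W1 α β = ENNReal.ofReal (s' - s) * W1 α β +
      (ENNReal.ofReal s * W1 α β + ENNReal.ofReal (1 - s') * W1 α β) := by
    rw [← add_mul, ← add_mul, ← ENNReal.ofReal_add h0 (by linarith),
      ← ENNReal.ofReal_add (by linarith) (by linarith)]
    have h' : s' - s + (s + (1 - s')) = 1 := by ring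
    rw [h', ENNReal.ofReal_one, one_mul]
  have hfin : (ENNReal.ofReal s * W1 α β + ENNReal.ofReal (1 - s') * W1 α β) ≠ ∞ := by
    simp [ENNReal.add_ne_top, ENNReal.mul_ne_top, htop]
  nth_rewrite 1 [hdecomp] at ch
  exact (ENNReal.add_le_add_iff_right hfin).mp ch

lemma itp_eq_abs (α β : Measure (E d)) [IsProbabilityMeasure α] [IsProbabilityMeasure β]
    (htop : W1 α β ≠ ∞) {s s' : ℝ} (hs : s ∈ Icc (0:ℝ) 1) (hs' : s' ∈ Icc (0:ℝ) 1) :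
    W1 (itp s α β) (itp s' α β) = ENNReal.ofReal |s - s'| * W1 α β := by
  rcases le_total s s' with h | h
  · rw [abs_sub_comm, abs_of_nonneg (by linarith)]
    exact itp_eq α β htop hs.1 h hs'.2
  · rw [abs_of_nonneg (by linarith), W1_symm]
    exact itp_eq α β htop hs'.1 h hs.2

lemma W1_ne_top_of_null {Y : Set (E d)} (hY : IsCompact Y)
    (α β : Measure (E d)) [IsProbabilityMeasure α] [IsProbabilityMeasure β]
    (hα : α Yᶜ = 0) (hβ : β Yᶜ = 0) : W1 α β ≠ ∞ := by
  have hb : EMetric.diam Y ≠ ∞ := hY.isBounded.ediam_ne_top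
  have hle : W1 α β ≤ EMetric.diam Y := by
    refine (W1_le α β (α.prod β) ?_ ?_).trans ?_
    · exact Measure.fst_prod
    · exact Measure.snd_prod
    · have h1 : (α.prod β) ((Y ×ˢ Y)ᶜ) = 0 := by
        have hsub : ((Y ×ˢ Y)ᶜ : Set (E d × E d)) ⊆ (Yᶜ ×ˢ univ) ∪ (univ ×ˢ Yᶜ) := by
          intro p hp
          simp only [Set.mem_compl_iff, Set.mem_prod, not_and_or] at hp
          rcases hp with hp | hp <;> simp [Set.mem_prod, hp]
        refine measure_mono_null hsub (measure_union_null ?_ ?_)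
        · rw [Measure.prod_prod, hα, zero_mul]
        · rw [Measure.prod_prod, hβ, mul_zero]
      have hae : ∀ᵐ p ∂(α.prod β), edist p.1 p.2 ≤ EMetric.diam Y := by
        filter_upwards [(mem_ae_iff.mpr h1 : (Y ×ˢ Y : Set (E d × E d)) ∈ ae (α.prod β))]
          with p hp
        exact EMetric.edist_le_diam_of_mem hp.1 hp.2
      calc (∫⁻ p, edist p.1 p.2 ∂α.prod β) ≤ ∫⁻ _, EMetric.diam Y ∂α.prod β :=
            lintegral_mono_ae hae
        _ = EMetric.diam Y := by
            haveI : IsProbabilityMeasure (α.prod β) := by infer_instance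
            rw [lintegral_const, measure_univ, mul_one]
  exact ne_top_of_le_ne_top hb hle

/-- The interpolated kernel. -/
noncomputable def itpK (s : ℝ) (κ0 κ1 : Kernel (E d) (E d)) : Kernel (E d) (E d) where
  toFun := fun x => itp s (κ0 x) (κ1 x)
  measurable' := by
    refine Measure.measurable_of_measurable_coe _ fun t ht => ?_
    simp only [itp, Measure.coe_add, Measure.coe_smul, Pi.add_apply, Pi.smul_apply,
      smul_eq_mul]
    exact ((κ0.measurable_coe ht).const_mul _).add ((κ1.measurable_coe ht).const_mul _)

lemma itpK_apply (s : ℝ) (κ0 κ1 : Kernel (E d) (E d)) (x : E d) :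
    itpK s κ0 κ1 x = itp s (κ0 x) (κ1 x) := rfl

lemma itpK_markov (s : ℝ) (hs0 : 0 ≤ s) (hs1 : s ≤ 1)
    (κ0 κ1 : Kernel (E d) (E d)) [IsMarkovKernel κ0] [IsMarkovKernel κ1] :
    IsMarkovKernel (itpK s κ0 κ1) :=
  ⟨fun x => itp_prob (κ0 x) (κ1 x) hs0 hs1⟩

lemma disint_eq {α Ω : Type*} [MeasurableSpace α] [MeasurableSpace Ω]
    [StandardBorelSpace Ω] [Nonempty Ω] (π : Measure (α × Ω)) [h : IsFiniteMeasure π] (x : α) :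
    disint π x = π.condKernel x :=
  dif_pos h

end W1Lemmas

open ProbabilityTheory

/-- `(Π(μ), 𝒲)` is a geodesic space (for `Y` compact and convex): any two
couplings `π⁰, π¹ ∈ Π(μ)` are joined by a constant-speed geodesic for the vertical
transport metric `𝒲`. -/
theorem stmt12 (d : ℕ) (Y : Set (E d)) (hY : IsCompact Y) (hYc : Convex ℝ Y)
    (μ : Measure (E d)) [IsProbabilityMeasure μ] (hμX : μ (Xcube d)ᶜ = 0)
    (π0 π1 : Measure (E d × E d)) [IsProbabilityMeasure π0] [IsProbabilityMeasure π1]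
    (h0 : π0.map Prod.fst = μ) (h1 : π1.map Prod.fst = μ)
    (h0s : π0 (Xcube d ×ˢ Y)ᶜ = 0) (h1s : π1 (Xcube d ×ˢ Y)ᶜ = 0) :
    ∃ π : ℝ → Measure (E d × E d),
      π 0 = π0 ∧ π 1 = π1 ∧
      (∀ s ∈ Icc (0:ℝ) 1, IsProbabilityMeasure (π s) ∧ (π s).map Prod.fst = μ ∧
        (π s) (Xcube d ×ˢ Y)ᶜ = 0) ∧
      ∀ s ∈ Icc (0:ℝ) 1, ∀ s' ∈ Icc (0:ℝ) 1,
        VW μ (π s) (π s') = ENNReal.ofReal |s - s'| * VW μ π0 π1 := by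
  classical
  set κ0 := π0.condKernel with hκ0
  set κ1 := π1.condKernel with hκ1
  have hfst0 : π0.fst = μ := h0
  have hfst1 : π1.fst = μ := h1
  have hd0 : μ ⊗ₘ κ0 = π0 := by rw [← hfst0]; exact π0.disintegrate π0.condKernel
  have hd1 : μ ⊗ₘ κ1 = π1 := by rw [← hfst1]; exact π1.disintegrate π1.condKernel
  -- the interpolation family
  set π : ℝ → Measure (E d × E d) :=
    fun s => ENNReal.ofReal (1 - s) • π0 + ENNReal.ofReal s • π1 with hπ
  have hπ0 : π 0 = π0 := by simp [hπ]
  have hπ1 : π 1 = π1 := by simp [hπ]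
  have hπprob : ∀ s ∈ Icc (0:ℝ) 1, IsProbabilityMeasure (π s) := by
    intro s hs
    constructor
    simp only [hπ, Measure.coe_add, Measure.coe_smul, Pi.add_apply, Pi.smul_apply,
      smul_eq_mul, measure_univ, mul_one]
    rw [← ENNReal.ofReal_add (by linarith [hs.2]) hs.1]
    norm_num
  have hπfst : ∀ s ∈ Icc (0:ℝ) 1, (π s).map Prod.fst = μ := by
    intro s hs
    rw [hπ]
    simp only
    rw [Measure.map_add _ _ measurable_fst, Measure.map_smul, Measure.map_smul, h0, h1,
      ← add_smul, ← ENNReal.ofReal_add (by linarith [hs.2]) hs.1]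
    norm_num
  have hπnull : ∀ s : ℝ, (π s) (Xcube d ×ˢ Y)ᶜ = 0 := by
    intro s
    simp [hπ, h0s, h1s]
  have hcomp : ∀ s ∈ Icc (0:ℝ) 1, π s = μ ⊗ₘ (itpK s κ0 κ1) := by
    intro s hs
    haveI : IsMarkovKernel (itpK s κ0 κ1) := itpK_markov s hs.1 hs.2 κ0 κ1
    ext t ht
    rw [Measure.compProd_apply ht]
    have hpt : ∀ x, itpK s κ0 κ1 x (Prod.mk x ⁻¹' t) =
        ENNReal.ofReal (1 - s) * κ0 x (Prod.mk x ⁻¹' t)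
          + ENNReal.ofReal s * κ1 x (Prod.mk x ⁻¹' t) := by
      intro x
      simp [itpK_apply, itp]
    simp_rw [hpt]
    rw [lintegral_add_left ((Kernel.measurable_kernel_prodMk_left ht).const_mul _),
      lintegral_const_mul' _ _ ENNReal.ofReal_ne_top,
      lintegral_const_mul' _ _ ENNReal.ofReal_ne_top,
      ← Measure.compProd_apply ht, ← Measure.compProd_apply ht, hd0, hd1]
    simp [hπ]
  have hae : ∀ s ∈ Icc (0:ℝ) 1, ∀ᵐ x ∂μ, itpK s κ0 κ1 x = disint (π s) x := by
    intro s hs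
    haveI := hπprob s hs
    haveI : IsMarkovKernel (itpK s κ0 κ1) := itpK_markov s hs.1 hs.2 κ0 κ1
    have hfst : (π s).fst = μ := hπfst s hs
    have h := eq_condKernel_of_measure_eq_compProd (ρ := π s) (itpK s κ0 κ1)
      (by rw [hfst]; exact hcomp s hs)
    rw [hfst] at h
    filter_upwards [h] with x hx
    rw [hx, disint_eq]
  have hκ0Y : ∀ᵐ x ∂μ, κ0 x Yᶜ = 0 := by
    have hnull : π0 (Set.univ ×ˢ Yᶜ) = 0 := by
      refine measure_mono_null ?_ h0s
      intro p hp
      simp only [Set.mem_prod, Set.mem_compl_iff] at *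
      tauto
    have hae0 : ∀ᵐ p ∂π0, p.2 ∈ Y := by
      refine mem_ae_iff.mpr ?_
      have : ({p : E d × E d | p.2 ∈ Y}ᶜ : Set (E d × E d)) = Set.univ ×ˢ Yᶜ := by
        ext p; simp
      rw [this]; exact hnull
    rw [← hd0] at hae0
    have h := Measure.ae_ae_of_ae_compProd hae0
    filter_upwards [h] with x hx
    rw [ae_iff] at hx
    simpa [Set.compl_def] using hx
  have hκ1Y : ∀ᵐ x ∂μ, κ1 x Yᶜ = 0 := by
    have hnull : π1 (Set.univ ×ˢ Yᶜ) = 0 := by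
      refine measure_mono_null ?_ h1s
      intro p hp
      simp only [Set.mem_prod, Set.mem_compl_iff] at *
      tauto
    have hae1 : ∀ᵐ p ∂π1, p.2 ∈ Y := by
      refine mem_ae_iff.mpr ?_
      have : ({p : E d × E d | p.2 ∈ Y}ᶜ : Set (E d × E d)) = Set.univ ×ˢ Yᶜ := by
        ext p; simp
      rw [this]; exact hnull
    rw [← hd1] at hae1
    have h := Measure.ae_ae_of_ae_compProd hae1
    filter_upwards [h] with x hx
    rw [ae_iff] at hx
    simpa [Set.compl_def] using hx
  have hfin : ∀ᵐ x ∂μ, W1 (κ0 x) (κ1 x) ≠ ∞ := by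
    filter_upwards [hκ0Y, hκ1Y] with x hx0 hx1
    exact W1_ne_top_of_null hY _ _ hx0 hx1
  refine ⟨π, hπ0, hπ1, fun s hs => ⟨hπprob s hs, hπfst s hs, hπnull s⟩, ?_⟩
  intro s hs s' hs'
  have hVW01 : VW μ π0 π1 = ∫⁻ x, W1 (κ0 x) (κ1 x) ∂μ := by
    simp only [VW]
    refine lintegral_congr fun x => ?_
    rw [disint_eq, disint_eq]
  have hmain : VW μ (π s) (π s') = ∫⁻ x, ENNReal.ofReal |s - s'| * W1 (κ0 x) (κ1 x) ∂μ := by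
    simp only [VW]
    refine lintegral_congr_ae ?_
    filter_upwards [hae s hs, hae s' hs', hfin] with x hx hx' hfx
    rw [← hx, ← hx', itpK_apply, itpK_apply]
    exact itp_eq_abs (κ0 x) (κ1 x) hfx hs hs'
  rw [hmain, lintegral_const_mul' _ _ ENNReal.ofReal_ne_top, hVW01]
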